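/- Let H be a complex Hilbert space and let f : [0,1] → B(H) be strongly continuous, such that each f(t) is self-adjoint with 0 ≤ f(t) ≤ 1, and such that the map t ↦ f(t) − f(t)² is continuous in operator norm with f(t) − f(t)² compact for every t. Then there exist n ∈ ℕ, a partition 0 = x₀ < x₁ < ⋯ < x_{n+1} = 1, and for each i = 0,…,n a strongly continuous map f_i : [x_i, x_{i+1}] → B(H) with each f_i(t) a projection, such that for every i the map t ↦ f(t) − f_i(t) is continuous in operator norm and compact-operator valued on [x_i, x_{i+1}], and f_i(x_i) − f_{i−1}(x_i) is compact for i = 1,…,n. (Every projection in the corona algebra of C([0,1]) ⊗ K admits a projection-valued local lifting.) -/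

import Mathlib

open ContinuousLinearMap Module Set Metric Filter Topology

set_option linter.unusedSectionVars false
set_option maxHeartbeats 1000000

section Helpers
variable {H : Type*} [NormedAddCommGroup H] [InnerProductSpace ℂ H] [CompleteSpace H]

lemma spec_Icc01 (a : H →L[ℂ] H) (hsa : IsSelfAdjoint a) (h0 : 0 ≤ a) (h1 : a ≤ 1) :
    spectrum ℝ a ⊆ Icc (0:ℝ) 1 := by
  intro x hx
  refine ⟨spectrum_nonneg_of_nonneg h0 hx, ?_⟩
  have h1' : 0 ≤ 1 - a := sub_nonneg.mpr h1
  have e : cfc (fun y : ℝ => 1 - y) a = 1 - a := by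
    rw [cfc_sub (fun _ : ℝ => (1:ℝ)) (fun y : ℝ => y) a, cfc_const_one ℝ a, cfc_id' ℝ a]
  have hmem : (1 : ℝ) - x ∈ spectrum ℝ (1 - a) := by
    rw [← e, cfc_map_spectrum (fun y : ℝ => 1 - y) a]
    exact ⟨x, hx, rfl⟩
  have := spectrum_nonneg_of_nonneg h1' hmem
  linarith

lemma approx_eig (d : H →L[ℂ] H) (hd : IsSelfAdjoint d) {μ : ℝ} (hμ : μ ∈ spectrum ℝ d)
    {θ : ℝ} (hθ : 0 < θ) : ∃ v : H, ‖v‖ = 1 ∧ ‖d v - μ • v‖ < θ := by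
  set ρ : ℝ := θ/4 with hρ
  have hρ0 : 0 < ρ := by positivity
  set h : ℝ → ℝ := fun x => max 0 (1 - |x - μ| / ρ) with hh
  have hcont : Continuous h := by
    apply Continuous.max continuous_const
    fun_prop
  have hbd : ∀ x : ℝ, |h x| ≤ 1 := by
    intro x
    rw [abs_le]
    refine ⟨le_trans (by norm_num) (le_max_left _ _), ?_⟩
    simp only [hh, max_le_iff]
    have : 0 ≤ |x - μ| / ρ := by positivity
    constructor <;> linarith
  set b : H →L[ℂ] H := cfc h d with hb
  have hb1 : (1:ℝ) ≤ ‖b‖ := by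
    have := norm_apply_le_norm_cfc h d hμ (Continuous.continuousOn hcont) hd
    simpa [hh] using this
  have hprod : cfc (fun x => (x - μ) * h x) d = (d - algebraMap ℝ (H →L[ℂ] H) μ) * b := by
    rw [cfc_mul (fun x : ℝ => x - μ) h d]
    congr 1
    rw [cfc_sub (fun x : ℝ => x) (fun _ : ℝ => μ) d, cfc_id' ℝ d, cfc_const μ d]
  have hprodnorm : ‖(d - algebraMap ℝ (H →L[ℂ] H) μ) * b‖ ≤ ρ := by
    rw [← hprod]
    apply norm_cfc_le hρ0.le
    intro x hx
    rcases le_or_gt (|x - μ|) ρ with hc | hc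
    · calc ‖(x - μ) * h x‖ = |x - μ| * |h x| := abs_mul _ _
        _ ≤ ρ * 1 := mul_le_mul hc (hbd x) (abs_nonneg _) hρ0.le
        _ = ρ := mul_one ρ
    · have h1x : (1:ℝ) ≤ |x - μ| / ρ := (one_le_div hρ0).mpr hc.le
      have : h x = 0 := by
        simp only [hh, max_eq_left_iff]
        linarith
      simp [this, hρ0.le]
  obtain ⟨u, hu1, hu2⟩ := b.exists_lt_apply_of_lt_opNorm (r := 1/2) (by linarith)
  have hbu : (0:ℝ) < ‖b u‖ := lt_trans (by norm_num) hu2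
  refine ⟨(‖b u‖:ℝ)⁻¹ • (b u), ?_, ?_⟩
  · rw [norm_smul]; simp [abs_of_pos hbu, inv_mul_cancel₀ hbu.ne']
  · have key : d ((‖b u‖:ℝ)⁻¹ • (b u)) - μ • ((‖b u‖:ℝ)⁻¹ • (b u))
        = (‖b u‖:ℝ)⁻¹ • (((d - algebraMap ℝ (H →L[ℂ] H) μ) * b) u) := by
      simp only [mul_apply, ContinuousLinearMap.sub_apply, map_smul_of_tower]
      rw [Algebra.algebraMap_eq_smul_one]
      simp only [ContinuousLinearMap.mul_apply, ContinuousLinearMap.sub_apply, ContinuousLinearMap.smul_apply, ContinuousLinearMap.one_apply, smul_sub]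
      rw [smul_comm]
    rw [key, norm_smul]
    have h2 : ‖((d - algebraMap ℝ (H →L[ℂ] H) μ) * b) u‖ ≤ ρ * ‖u‖ :=
      ((d - algebraMap ℝ (H →L[ℂ] H) μ) * b).le_of_opNorm_le hprodnorm u
    have h3 : ‖(‖b u‖:ℝ)⁻¹‖ ≤ 2 := by
      rw [Real.norm_eq_abs, abs_of_pos (inv_pos.mpr hbu)]
      rw [inv_le_comm₀ hbu (by norm_num)]
      linarith
    calc ‖(‖b u‖:ℝ)⁻¹‖ * ‖((d - algebraMap ℝ (H →L[ℂ] H) μ) * b) u‖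
        ≤ 2 * (ρ * ‖u‖) := by
          apply mul_le_mul h3 h2 (norm_nonneg _) (by norm_num)
      _ ≤ 2 * (ρ * 1) := by nlinarith [hρ0]
      _ < θ := by rw [hρ]; linarith

lemma exists_eigenvector (d : H →L[ℂ] H) (hd : IsSelfAdjoint d) (hcomp : IsCompactOperator ⇑d)
    {μ : ℝ} (hμ : μ ∈ spectrum ℝ d) (hμpos : 0 < μ) :
    ∃ v : H, ‖v‖ = 1 ∧ d v = μ • v := by
  have happrox : ∀ n : ℕ, ∃ v : H, ‖v‖ = 1 ∧ ‖d v - μ • v‖ < 1/(n+1) :=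
    fun n => approx_eig d hd hμ (by positivity)
  choose v hv1 hv2 using happrox
  obtain ⟨K, hKc, hKm⟩ := hcomp
  obtain ⟨ε, hε, hball⟩ := Metric.mem_nhds_iff.mp hKm
  have hyK : ∀ n, d ((ε/2 : ℝ) • v n) ∈ K := by
    intro n
    apply hball
    rw [mem_ball_zero_iff, norm_smul, hv1]
    simp only [mul_one, Real.norm_eq_abs, abs_of_pos (by positivity : (0:ℝ) < ε/2)]
    linarith
  obtain ⟨w, hwK, φ, hφ, hconv⟩ := hKc.tendsto_subseq hyK
  have h1 : Tendsto (fun n => d (v (φ n))) atTop (𝓝 ((2/ε : ℝ) • w)) := by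
    have e : (fun n => d (v (φ n))) = fun n => (2/ε : ℝ) • (d ((ε/2:ℝ) • v (φ n))) := by
      ext n
      rw [map_smul_of_tower, smul_smul]
      rw [show (2/ε) * (ε/2) = 1 by field_simp, one_smul]
    rw [e]
    exact hconv.const_smul _
  have h0 : Tendsto (fun n => d (v (φ n)) - μ • v (φ n)) atTop (𝓝 0) := by
    exact squeeze_zero_norm (fun n => (hv2 (φ n)).le)
      (tendsto_one_div_add_atTop_nhds_zero_nat.comp hφ.tendsto_atTop)
  have hμv : Tendsto (fun n => μ • v (φ n)) atTop (𝓝 ((2/ε:ℝ) • w)) := by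
    have := h1.sub h0
    simpa using this
  have hv : Tendsto (fun n => v (φ n)) atTop (𝓝 ((μ⁻¹ : ℝ) • (2/ε:ℝ) • w)) := by
    have := hμv.const_smul (μ⁻¹ : ℝ)
    simpa [smul_smul, inv_mul_cancel₀ hμpos.ne'] using this
  set u := (μ⁻¹ : ℝ) • (2/ε:ℝ) • w with hu
  have hu1 : ‖u‖ = 1 := by
    have hn : Tendsto (fun n => ‖v (φ n)‖) atTop (𝓝 ‖u‖) := hv.norm
    have hn' : Tendsto (fun n => ‖v (φ n)‖) atTop (𝓝 1) := by
      simp only [hv1]; exact tendsto_const_nhds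
    exact tendsto_nhds_unique hn hn'
  have hdu : d u = μ • u := by
    have h2 : Tendsto (fun n => d (v (φ n))) atTop (𝓝 (d u)) :=
      (d.continuous.tendsto u).comp hv
    have e1 : d u = (2/ε:ℝ) • w := tendsto_nhds_unique h2 h1
    rw [e1, hu, smul_smul, mul_inv_cancel₀ hμpos.ne', one_smul]
  exact ⟨u, hu1, hdu⟩

lemma finite_large_spec (d : H →L[ℂ] H) (hd : IsSelfAdjoint d) (hcomp : IsCompactOperator ⇑d)
    {ε : ℝ} (hε : 0 < ε) : {μ : ℝ | μ ∈ spectrum ℝ d ∧ ε ≤ μ}.Finite := by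
  by_contra hinf
  rw [← Set.not_infinite, not_not] at hinf
  set S := {μ : ℝ | μ ∈ spectrum ℝ d ∧ ε ≤ μ} with hS
  let e := hinf.natEmbedding
  have hev : ∀ n : ℕ, ∃ v : H, ‖v‖ = 1 ∧ d v = ((e n : ℝ)) • v := fun n =>
    exists_eigenvector d hd hcomp (e n).2.1 (lt_of_lt_of_le hε (e n).2.2)
  choose v hv1 hv2 using hev
  have hne : ∀ n m : ℕ, n ≠ m → ((e n : ℝ)) ≠ ((e m : ℝ)) := by
    intro n m hnm h
    exact hnm (e.injective (Subtype.ext h))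
  have horth : ∀ n m : ℕ, n ≠ m → (inner ℂ (v n) (v m) : ℂ) = 0 := by
    intro n m hnm
    have hsa : ∀ x y : H, (inner ℂ (d x) y : ℂ) = inner ℂ x (d y) := by
      intro x y
      have h := ContinuousLinearMap.adjoint_inner_left d y x
      rw [ContinuousLinearMap.isSelfAdjoint_iff'.mp hd] at h
      exact h
    have h1 : (inner ℂ (d (v n)) (v m) : ℂ) = ((e n : ℝ) : ℂ) * inner ℂ (v n) (v m) := by
      rw [hv2 n, RCLike.real_smul_eq_coe_smul (K := ℂ), inner_smul_left]
      simp [Complex.conj_ofReal]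
    have h2 : (inner ℂ (v n) (d (v m)) : ℂ) = ((e m : ℝ) : ℂ) * inner ℂ (v n) (v m) := by
      rw [hv2 m, RCLike.real_smul_eq_coe_smul (K := ℂ), inner_smul_right]
      rfl
    have h3 := hsa (v n) (v m)
    rw [h1, h2] at h3
    have h4 : (((e n : ℝ) : ℂ) - ((e m : ℝ) : ℂ)) * inner ℂ (v n) (v m) = 0 := by
      rw [sub_mul, h3, sub_self]
    rcases mul_eq_zero.mp h4 with h | h
    · exfalso
      apply hne n m hnm
      have := sub_eq_zero.mp h
      exact_mod_cast this
    · exact h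
  have hdist : ∀ n m : ℕ, n ≠ m → ε < ‖d (v n) - d (v m)‖ := by
    intro n m hnm
    have hsq : ‖d (v n) - d (v m)‖ ^ 2 = (e n : ℝ)^2 + (e m : ℝ)^2 := by
      rw [hv2 n, hv2 m, RCLike.real_smul_eq_coe_smul (K := ℂ),
        RCLike.real_smul_eq_coe_smul (K := ℂ) (x := v m)]
      rw [@norm_sub_sq ℂ]
      rw [inner_smul_left, inner_smul_right, horth n m hnm]
      simp [norm_smul, hv1]
    have hεn : ε ≤ (e n : ℝ) := (e n).2.2
    have hεm : ε ≤ (e m : ℝ) := (e m).2.2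
    nlinarith [norm_nonneg (d (v n) - d (v m))]
  -- compactness: scaled images in a compact set
  obtain ⟨K, hKc, hKm⟩ := hcomp
  obtain ⟨r, hr, hball⟩ := Metric.mem_nhds_iff.mp hKm
  have hyK : ∀ n, d ((r/2 : ℝ) • v n) ∈ K := by
    intro n
    apply hball
    rw [mem_ball_zero_iff, norm_smul, hv1]
    simp only [mul_one, Real.norm_eq_abs, abs_of_pos (by positivity : (0:ℝ) < r/2)]
    linarith
  obtain ⟨t, htfin, htcov⟩ := (totallyBounded_iff.mp hKc.totallyBounded) (r*ε/8) (by positivity)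
  have hchoice : ∀ n : ℕ, ∃ y ∈ t, d ((r/2 : ℝ) • v n) ∈ ball y (r*ε/8) := by
    intro n
    have := htcov (hyK n)
    simpa using this
  choose y hy1 hy2 using hchoice
  haveI : Finite ↥t := htfin.to_subtype
  obtain ⟨n, m, hnm, heq⟩ := Finite.exists_ne_map_eq_of_infinite
    (fun n : ℕ => (⟨y n, hy1 n⟩ : ↥t))
  have hyeq : y n = y m := congrArg Subtype.val heq
  have hlt : dist (d ((r/2:ℝ) • v n)) (d ((r/2:ℝ) • v m)) < r*ε/4 := by
    calc dist (d ((r/2:ℝ) • v n)) (d ((r/2:ℝ) • v m))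
        ≤ dist (d ((r/2:ℝ) • v n)) (y n) + dist (y n) (d ((r/2:ℝ) • v m)) := dist_triangle _ _ _
      _ < r*ε/8 + r*ε/8 := by
          apply add_lt_add (mem_ball.mp (hy2 n))
          rw [dist_comm, hyeq]
          exact mem_ball.mp (hy2 m)
      _ = r*ε/4 := by ring
  have hge : r*ε/4 < dist (d ((r/2:ℝ) • v n)) (d ((r/2:ℝ) • v m)) := by
    rw [dist_eq_norm, map_smul_of_tower, map_smul_of_tower, ← smul_sub, norm_smul]
    simp only [Real.norm_eq_abs, abs_of_pos (by positivity : (0:ℝ) < r/2)]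
    have := hdist n m hnm
    nlinarith
  linarith

lemma exists_gap (d : H →L[ℂ] H) (hd : IsSelfAdjoint d) (hcomp : IsCompactOperator ⇑d) :
    ∃ μ δ : ℝ, 0 < δ ∧ 1/16 < μ - δ ∧ μ + δ < 3/16 ∧
      ∀ x ∈ spectrum ℝ d, x ∉ Ioo (μ - δ) (μ + δ) := by
  have hfin : {x : ℝ | x ∈ spectrum ℝ d ∧ 1/16 ≤ x}.Finite :=
    finite_large_spec d hd hcomp (by norm_num)
  set E := {x : ℝ | x ∈ spectrum ℝ d ∧ 1/16 ≤ x} with hE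
  obtain ⟨μ, hμd⟩ := ((Set.Ioo_infinite (a := (1/8:ℝ)) (b := (3/16:ℝ)) (by norm_num)).diff
    hfin).nonempty
  obtain ⟨hμmem, hμE⟩ := hμd
  obtain ⟨δ₁, hδ₁, hball⟩ := Metric.isOpen_iff.mp hfin.isClosed.isOpen_compl μ hμE
  obtain ⟨hμl, hμr⟩ := hμmem
  refine ⟨μ, min (δ₁/2) (min ((μ - 1/8)/2) ((3/16 - μ)/2)),
    lt_min (by linarith) (lt_min (by linarith) (by linarith)), ?_, ?_, ?_⟩
  · have : min (δ₁/2) (min ((μ - 1/8)/2) ((3/16 - μ)/2)) ≤ (μ - 1/8)/2 :=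
      le_trans (min_le_right _ _) (min_le_left _ _)
    linarith
  · have : min (δ₁/2) (min ((μ - 1/8)/2) ((3/16 - μ)/2)) ≤ (3/16 - μ)/2 :=
      le_trans (min_le_right _ _) (min_le_right _ _)
    linarith
  · intro x hx hxIoo
    obtain ⟨hx1, hx2⟩ := hxIoo
    have hle1 : min (δ₁/2) (min ((μ - 1/8)/2) ((3/16 - μ)/2)) ≤ δ₁/2 := min_le_left _ _
    have hle2 : min (δ₁/2) (min ((μ - 1/8)/2) ((3/16 - μ)/2)) ≤ (μ - 1/8)/2 :=
      le_trans (min_le_right _ _) (min_le_left _ _)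
    have hxE : x ∈ E := ⟨hx, by linarith⟩
    have hxball : x ∈ ball μ δ₁ := by
      rw [mem_ball, Real.dist_eq, abs_lt]
      constructor <;> linarith
    exact (hball hxball) hxE

lemma gap_stable {b b' : H →L[ℂ] H} (hb : IsSelfAdjoint b) {μ δ : ℝ} (hδ : 0 < δ)
    (hgap : ∀ x ∈ spectrum ℝ b, x ∉ Ioo (μ - δ) (μ + δ)) (hnear : ‖b' - b‖ < δ/2)
    {μ' : ℝ} (hμ' : |μ' - μ| ≤ δ/2) : μ' ∉ spectrum ℝ b' := by
  have hdist : ∀ x ∈ spectrum ℝ b, δ/2 ≤ |μ' - x| := by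
    intro x hx
    have hno := hgap x hx
    simp only [mem_Ioo, not_and, not_lt] at hno
    rw [abs_le] at hμ'
    rw [le_abs]
    rcases le_or_gt x (μ - δ) with h | h
    · left; linarith
    · have hxd := hno h
      right; linarith
  have hne : ∀ x ∈ spectrum ℝ b, μ' - x ≠ 0 := by
    intro x hx h
    have := hdist x hx
    rw [h] at this
    simp at this
    linarith
  have hcont : ContinuousOn (fun x : ℝ => (μ' - x)⁻¹) (spectrum ℝ b) :=
    ContinuousOn.inv₀ (by fun_prop) hne
  set r := cfc (fun x : ℝ => (μ' - x)⁻¹) b with hr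
  have e : algebraMap ℝ (H →L[ℂ] H) μ' - b = cfc (fun x : ℝ => μ' - x) b := by
    rw [cfc_sub (fun _ : ℝ => μ') (fun x : ℝ => x) b, cfc_const μ' b, cfc_id' ℝ b]
  have hru : r * (algebraMap ℝ (H →L[ℂ] H) μ' - b) = 1 := by
    rw [e, hr, ← cfc_mul _ _ b hcont (by fun_prop)]
    calc cfc (fun x : ℝ => (μ' - x)⁻¹ * (μ' - x)) b = cfc (fun _ : ℝ => (1:ℝ)) b :=
          cfc_congr (fun x hx => inv_mul_cancel₀ (hne x hx))
      _ = 1 := cfc_const_one ℝ b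
  have hur : (algebraMap ℝ (H →L[ℂ] H) μ' - b) * r = 1 := by
    rw [e, hr, ← cfc_mul _ _ b (by fun_prop) hcont]
    calc cfc (fun x : ℝ => (μ' - x) * (μ' - x)⁻¹) b = cfc (fun _ : ℝ => (1:ℝ)) b :=
          cfc_congr (fun x hx => mul_inv_cancel₀ (hne x hx))
      _ = 1 := cfc_const_one ℝ b
  have hrnorm : ‖r‖ ≤ 2/δ := by
    apply norm_cfc_le (by positivity)
    intro x hx
    rw [Real.norm_eq_abs, abs_inv]
    rw [inv_le_comm₀ (lt_of_lt_of_le (by positivity) (hdist x hx)) (by positivity)]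
    calc (2/δ)⁻¹ = δ/2 := by field_simp
      _ ≤ |μ' - x| := hdist x hx
  have hunit0 : IsUnit (algebraMap ℝ (H →L[ℂ] H) μ' - b) :=
    ⟨⟨algebraMap ℝ (H →L[ℂ] H) μ' - b, r, hur, hru⟩, rfl⟩
  have hsmall : ‖r * (b' - b)‖ < 1 := by
    have h1 : ‖r * (b' - b)‖ ≤ ‖r‖ * ‖b' - b‖ := norm_mul_le _ _
    have h2 : ‖r‖ * ‖b' - b‖ < 1 := by
      rcases eq_or_lt_of_le (norm_nonneg r) with h | h
      · rw [← h, zero_mul]; norm_num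
      · calc ‖r‖ * ‖b' - b‖ < ‖r‖ * (δ/2) := mul_lt_mul_of_pos_left hnear h
          _ ≤ (2/δ) * (δ/2) :=
            mul_le_mul_of_nonneg_right hrnorm (le_of_lt (by positivity : (0:ℝ) < δ/2))
          _ = 1 := by field_simp
    linarith
  have hu1 : IsUnit (1 - r * (b' - b)) := (Units.oneSub _ hsmall).isUnit
  have key : algebraMap ℝ (H →L[ℂ] H) μ' - b'
      = (algebraMap ℝ (H →L[ℂ] H) μ' - b) * (1 - r * (b' - b)) := by
    rw [mul_sub, mul_one, ← mul_assoc, hur, one_mul]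
    abel
  rw [spectrum.notMem_iff, key]
  exact hunit0.mul hu1


set_option linter.unusedSectionVars false

lemma strong_pow (f : ℝ → H →L[ℂ] H) (J : Set ℝ) (hb : ∀ s ∈ J, ‖f s‖ ≤ 1)
    (hsc : ∀ v : H, ContinuousOn (fun s => f s v) J) (k : ℕ) (v : H) :
    ContinuousOn (fun s => (f s ^ k) v) J := by
  induction k with
  | zero => simpa using continuousOn_const
  | succ k ih =>
    intro t ht
    have hIH : Tendsto (fun s => (f s ^ k) v) (𝓝[J] t) (𝓝 ((f t ^ k) v)) := ih t ht
    have h1 : Tendsto (fun s => f s ((f s ^ k) v - (f t ^ k) v)) (𝓝[J] t) (𝓝 0) := by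
      refine squeeze_zero_norm' (a := fun s => ‖(f s ^ k) v - (f t ^ k) v‖) ?_ ?_
      · filter_upwards [self_mem_nhdsWithin] with s hs
        calc ‖f s ((f s ^ k) v - (f t ^ k) v)‖ ≤ ‖f s‖ * ‖(f s ^ k) v - (f t ^ k) v‖ :=
              (f s).le_opNorm _
          _ ≤ 1 * ‖(f s ^ k) v - (f t ^ k) v‖ :=
              mul_le_mul_of_nonneg_right (hb s hs) (norm_nonneg _)
          _ = ‖(f s ^ k) v - (f t ^ k) v‖ := one_mul _
      · have h := hIH.sub (tendsto_const_nhds (x := (f t ^ k) v))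
        rw [sub_self] at h
        simpa using h.norm
    have h2 : Tendsto (fun s => f s ((f t ^ k) v)) (𝓝[J] t) (𝓝 (f t ((f t ^ k) v))) :=
      hsc ((f t ^ k) v) t ht
    have h3 : Tendsto (fun s => f s ((f s ^ k) v)) (𝓝[J] t) (𝓝 (f t ((f t ^ k) v))) := by
      have := h1.add h2
      rw [zero_add] at this
      convert this using 2 with s
      rw [map_sub]
      abel
    have e : ∀ s : ℝ, (f s ^ (k+1)) v = f s ((f s ^ k) v) := by
      intro s
      rw [pow_succ']
      rfl
    simp only [ContinuousWithinAt, e]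
    exact h3

lemma strong_aeval (f : ℝ → H →L[ℂ] H) (J : Set ℝ) (hb : ∀ s ∈ J, ‖f s‖ ≤ 1)
    (hsc : ∀ v : H, ContinuousOn (fun s => f s v) J) (p : Polynomial ℝ) (v : H) :
    ContinuousOn (fun s => (Polynomial.aeval (f s) p) v) J := by
  have e : ∀ s : ℝ, (Polynomial.aeval (f s) p) v
      = ∑ i ∈ Finset.range (p.natDegree + 1), p.coeff i • ((f s ^ i) v) := by
    intro s
    rw [Polynomial.aeval_eq_sum_range]
    simp [ContinuousLinearMap.sum_apply]
  have hsum : ContinuousOn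
      (fun s => ∑ i ∈ Finset.range (p.natDegree + 1), p.coeff i • ((f s ^ i) v)) J :=
    continuousOn_finset_sum _ (fun i _ => (strong_pow f J hb hsc i v).const_smul _)
  exact hsum.congr (fun s _ => e s)

lemma strong_cfc (f : ℝ → H →L[ℂ] H) (J : Set ℝ) (hJsa : ∀ s ∈ J, IsSelfAdjoint (f s))
    (hb : ∀ s ∈ J, ‖f s‖ ≤ 1) (hspec : ∀ s ∈ J, spectrum ℝ (f s) ⊆ Icc (0:ℝ) 1)
    (hsc : ∀ v : H, ContinuousOn (fun s => f s v) J) (u : ℝ → ℝ) (hu : Continuous u) (v : H) :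
    ContinuousOn (fun s => cfc u (f s) v) J := by
  intro t ht
  apply Metric.tendsto_nhds.mpr
  intro ε hε
  set ε₁ : ℝ := ε/(3*(‖v‖+1)) with hε₁
  have hε₁0 : 0 < ε₁ := by positivity
  obtain ⟨p, hp⟩ := exists_polynomial_near_of_continuousOn 0 1 u hu.continuousOn ε₁ hε₁0
  have key : ∀ s ∈ J, ‖cfc u (f s) v - (Polynomial.aeval (f s) p) v‖ ≤ ε/3 := by
    intro s hs
    have e1 : cfc u (f s) - Polynomial.aeval (f s) p = cfc (fun x => u x - p.eval x) (f s) := by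
      rw [cfc_sub u (fun x : ℝ => p.eval x) (f s) (hu.continuousOn) (by fun_prop)]
      rw [cfc_polynomial p (f s) (hJsa s hs)]
    have e2 : ‖cfc u (f s) - Polynomial.aeval (f s) p‖ ≤ ε₁ := by
      rw [e1]
      apply norm_cfc_le hε₁0.le
      intro x hx
      have := hp x (hspec s hs hx)
      rw [Real.norm_eq_abs, abs_sub_comm]
      linarith
    calc ‖cfc u (f s) v - (Polynomial.aeval (f s) p) v‖
        = ‖(cfc u (f s) - Polynomial.aeval (f s) p) v‖ := by rw [ContinuousLinearMap.sub_apply]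
      _ ≤ ‖cfc u (f s) - Polynomial.aeval (f s) p‖ * ‖v‖ := le_opNorm _ _
      _ ≤ ε₁ * (‖v‖ + 1) := by
          apply mul_le_mul e2 (by linarith) (norm_nonneg _) hε₁0.le
      _ = ε/3 := by rw [hε₁]; field_simp
  have hmid : Tendsto (fun s => (Polynomial.aeval (f s) p) v) (𝓝[J] t)
      (𝓝 ((Polynomial.aeval (f t) p) v)) := strong_aeval f J hb hsc p v t ht
  have hmid' : ∀ᶠ s in 𝓝[J] t,
      dist ((Polynomial.aeval (f s) p) v) ((Polynomial.aeval (f t) p) v) < ε/3 :=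
    Metric.tendsto_nhds.mp hmid (ε/3) (by positivity)
  filter_upwards [hmid', self_mem_nhdsWithin] with s hs hsJ
  have h1 := key s hsJ
  have h2 := key t ht
  rw [dist_eq_norm] at *
  calc ‖cfc u (f s) v - cfc u (f t) v‖
      ≤ ‖cfc u (f s) v - (Polynomial.aeval (f s) p) v‖
        + ‖(Polynomial.aeval (f s) p) v - (Polynomial.aeval (f t) p) v‖
        + ‖(Polynomial.aeval (f t) p) v - cfc u (f t) v‖ := by
        have := norm_add₃_le (a := cfc u (f s) v - (Polynomial.aeval (f s) p) v)
          (b := (Polynomial.aeval (f s) p) v - (Polynomial.aeval (f t) p) v)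
          (c := (Polynomial.aeval (f t) p) v - cfc u (f t) v)
        convert this using 2
        rfl
        abel
    _ < ε := by
        have h2' : ‖(Polynomial.aeval (f t) p) v - cfc u (f t) v‖ ≤ ε/3 := by
          rw [norm_sub_rev]; exact h2
        linarith

lemma normcont_mul (T K : ℝ → H →L[ℂ] H) (J : Set ℝ) (M : ℝ) (hM : 0 ≤ M)
    (hTb : ∀ s ∈ J, ‖T s‖ ≤ M) (hTsc : ∀ v : H, ContinuousOn (fun s => T s v) J)
    (hKc : ContinuousOn K J) (hKcomp : ∀ s ∈ J, IsCompactOperator ⇑(K s)) :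
    ContinuousOn (fun s => T s * K s) J := by
  intro t ht
  apply Metric.tendsto_nhds.mpr
  intro ε hε
  obtain ⟨K0, hK0c, hK0m⟩ := hKcomp t ht
  obtain ⟨r, hr, hball⟩ := Metric.mem_nhds_iff.mp hK0m
  have hE : ∀ᶠ s in 𝓝[J] t, ∀ v : H, ‖(T s - T t) (K t v)‖ ≤ (ε/3) * ‖v‖ := by
    set θ := ε/3 with hθ
    have hθ0 : 0 < θ := by positivity
    set ρ := θ*r/(8*(M+1)) with hρ
    have hρ0 : 0 < ρ := by positivity
    obtain ⟨F, hFfin, hFcov⟩ := (totallyBounded_iff.mp hK0c.totallyBounded) ρ hρ0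
    have hev : ∀ᶠ s in 𝓝[J] t, ∀ y ∈ F, ‖T s y - T t y‖ < θ*r/8 := by
      rw [hFfin.eventually_all]
      intro y hy
      have h := hTsc y t ht
      have h2 := Metric.tendsto_nhds.mp h (θ*r/8) (by positivity)
      filter_upwards [h2] with s hs
      rw [dist_eq_norm] at hs; exact hs
    filter_upwards [hev, self_mem_nhdsWithin] with s hsF hsJ
    have hK0bound : ∀ w ∈ K0, ‖(T s - T t) w‖ ≤ θ*r/2 := by
      intro w hw
      have hcov := hFcov hw
      simp only [mem_iUnion, exists_prop] at hcov
      obtain ⟨y, hyF, hyw⟩ := hcov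
      have hwy : ‖w - y‖ < ρ := by rw [← dist_eq_norm]; exact mem_ball.mp hyw
      have hMρ : M * ρ ≤ θ*r/8 := by
        have h8 : (M+1) * ρ = θ*r/8 := by rw [hρ]; field_simp
        nlinarith [hρ0]
      calc ‖(T s - T t) w‖ = ‖T s (w - y) + (T s y - T t y) + T t (y - w)‖ := by
            congr 1
            simp only [map_sub, ContinuousLinearMap.sub_apply]
            abel
        _ ≤ ‖T s (w - y)‖ + ‖T s y - T t y‖ + ‖T t (y - w)‖ := norm_add₃_le
        _ ≤ M * ρ + θ*r/8 + M * ρ := by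
            have b1 : ‖T s (w - y)‖ ≤ M * ρ := by
              calc ‖T s (w - y)‖ ≤ ‖T s‖ * ‖w - y‖ := (T s).le_opNorm _
                _ ≤ M * ρ := mul_le_mul (hTb s hsJ) hwy.le (norm_nonneg _) hM
            have b3 : ‖T t (y - w)‖ ≤ M * ρ := by
              calc ‖T t (y - w)‖ ≤ ‖T t‖ * ‖y - w‖ := (T t).le_opNorm _
                _ ≤ M * ρ := by
                  rw [norm_sub_rev]
                  exact mul_le_mul (hTb t ht) hwy.le (norm_nonneg _) hM
            linarith [(hsF y hyF).le]
        _ ≤ θ*r/2 := by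
            have hθr : 0 < θ * r := by positivity
            nlinarith [hMρ]
    intro v
    rcases eq_or_ne v 0 with rfl | hv
    · simp
    · have hvn : 0 < ‖v‖ := norm_pos_iff.mpr hv
      have hmemball : ((r/2 : ℝ) • ((‖v‖⁻¹ : ℝ) • v)) ∈ ball (0:H) r := by
        rw [mem_ball_zero_iff, norm_smul, norm_smul]
        simp only [Real.norm_eq_abs, abs_of_pos (by positivity : (0:ℝ) < r/2),
          abs_of_pos (inv_pos.mpr hvn)]
        rw [inv_mul_cancel₀ hvn.ne', mul_one]
        linarith
      have hscaled : K t ((r/2 : ℝ) • ((‖v‖⁻¹ : ℝ) • v)) ∈ K0 := hball hmemball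
      have hin := hK0bound _ hscaled
      have e : K t v = ((2/r) * ‖v‖ : ℝ) • K t ((r/2:ℝ) • ((‖v‖⁻¹:ℝ) • v)) := by
        rw [map_smul_of_tower, map_smul_of_tower, smul_smul, smul_smul]
        have hone : (2/r) * ‖v‖ * (r/2) * ‖v‖⁻¹ = 1 := by field_simp
        rw [hone, one_smul]
      rw [e, map_smul_of_tower, norm_smul]
      simp only [Real.norm_eq_abs]
      have habs : |(2/r)*‖v‖| = (2/r)*‖v‖ := abs_of_pos (by positivity)
      rw [habs]
      calc (2/r)*‖v‖ * ‖(T s - T t) (K t ((r/2:ℝ) • ((‖v‖⁻¹:ℝ) • v)))‖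
          ≤ (2/r)*‖v‖ * (θ*r/2) := by
            apply mul_le_mul_of_nonneg_left hin (by positivity)
        _ = θ * ‖v‖ := by field_simp
  have hKev : ∀ᶠ s in 𝓝[J] t, ‖K s - K t‖ < ε/(3*(M+1)) := by
    have h2 := Metric.tendsto_nhds.mp (hKc t ht) (ε/(3*(M+1))) (by positivity)
    filter_upwards [h2] with s hs
    rw [dist_eq_norm] at hs; exact hs
  filter_upwards [hE, hKev, self_mem_nhdsWithin] with s hsE hsK hsJ
  rw [dist_eq_norm]
  have hsplit : T s * K s - T t * K t = T s * (K s - K t) + (T s - T t) * K t := by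
    rw [mul_sub, sub_mul]
    abel
  rw [hsplit]
  have h1 : ‖T s * (K s - K t)‖ ≤ M * ‖K s - K t‖ :=
    le_trans (norm_mul_le _ _) (mul_le_mul_of_nonneg_right (hTb s hsJ) (norm_nonneg _))
  have h1' : M * ‖K s - K t‖ < ε/3 := by
    have hstep : M * ‖K s - K t‖ ≤ M * (ε/(3*(M+1))) :=
      mul_le_mul_of_nonneg_left hsK.le hM
    have hfrac : M * (ε/(3*(M+1))) < ε/3 := by
      rw [show M * (ε/(3*(M+1))) = (M*ε)/(3*(M+1)) by ring]
      rw [div_lt_div_iff₀ (by linarith) (by norm_num)]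
      nlinarith
    linarith
  have h2 : ‖(T s - T t) * K t‖ ≤ ε/3 := by
    apply ContinuousLinearMap.opNorm_le_bound _ (by positivity)
    intro v
    rw [ContinuousLinearMap.mul_apply]
    exact hsE v
  calc ‖T s * (K s - K t) + (T s - T t) * K t‖
      ≤ ‖T s * (K s - K t)‖ + ‖(T s - T t) * K t‖ := norm_add_le _ _
    _ < ε := by linarith

set_option maxHeartbeats 1000000 in
lemma local_lift (f : ℝ → H →L[ℂ] H)
    (hsc : ∀ v : H, ContinuousOn (fun t => f t v) (Icc (0:ℝ) 1))
    (hsa : ∀ t ∈ Icc (0:ℝ) 1, IsSelfAdjoint (f t))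
    (hpos : ∀ t ∈ Icc (0:ℝ) 1, (f t).IsPositive ∧ (1 - f t).IsPositive)
    (hnc : ContinuousOn (fun t => f t - f t * f t) (Icc (0:ℝ) 1))
    (hK : ∀ t ∈ Icc (0:ℝ) 1, IsCompactOperator (⇑(f t - f t * f t)))
    (t₀ : ℝ) (ht₀ : t₀ ∈ Icc (0:ℝ) 1) :
    ∃ r > 0, ∃ g : ℝ → H →L[ℂ] H,
      (∀ v : H, ContinuousOn (fun s => g s v) (Icc (0:ℝ) 1 ∩ ball t₀ r)) ∧
      (∀ s ∈ Icc (0:ℝ) 1 ∩ ball t₀ r, IsSelfAdjoint (g s) ∧ g s * g s = g s) ∧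
      ContinuousOn (fun s => f s - g s) (Icc (0:ℝ) 1 ∩ ball t₀ r) ∧
      (∀ s ∈ Icc (0:ℝ) 1 ∩ ball t₀ r, IsCompactOperator ⇑(f s - g s)) := by
  -- basic facts
  have h0 : ∀ s ∈ Icc (0:ℝ) 1, 0 ≤ f s := fun s hs =>
    (ContinuousLinearMap.nonneg_iff_isPositive (f s)).mpr (hpos s hs).1
  have h1 : ∀ s ∈ Icc (0:ℝ) 1, f s ≤ 1 := fun s hs => by
    have h := (ContinuousLinearMap.nonneg_iff_isPositive (1 - f s)).mpr (hpos s hs).2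
    exact sub_nonneg.mp h
  have hnorm1 : ∀ s ∈ Icc (0:ℝ) 1, ‖f s‖ ≤ 1 := fun s hs =>
    (CStarAlgebra.mem_Icc_iff_norm_le_one.mp ⟨h0 s hs, h1 s hs⟩).2
  have hspec : ∀ s ∈ Icc (0:ℝ) 1, spectrum ℝ (f s) ⊆ Icc (0:ℝ) 1 := fun s hs =>
    spec_Icc01 (f s) (hsa s hs) (h0 s hs) (h1 s hs)
  set d : ℝ → H →L[ℂ] H := fun s => f s - f s * f s with hd
  have hdsa : ∀ s ∈ Icc (0:ℝ) 1, IsSelfAdjoint (d s) := by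
    intro s hs
    have ha := hsa s hs
    have hmul : IsSelfAdjoint (f s * f s) := by
      rw [IsSelfAdjoint, star_mul, ha.star_eq]
    exact ha.sub hmul
  have hdcfc : ∀ s ∈ Icc (0:ℝ) 1, cfc (fun x : ℝ => x - x*x) (f s) = d s := by
    intro s hs
    rw [cfc_sub (fun x : ℝ => x) (fun x : ℝ => x*x) (f s),
      cfc_mul (fun x : ℝ => x) (fun x : ℝ => x) (f s), cfc_id' ℝ (f s)]
  -- gap for d t₀
  obtain ⟨μ, δ, hδ0, hμl, hμr, hgap⟩ := exists_gap (d t₀) (hdsa t₀ ht₀) (hK t₀ ht₀)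
  have hμpos : 0 < μ := by linarith
  have hμlt : μ < 3/16 := by linarith
  -- neighborhood where d is close to d t₀
  have hev : {s : ℝ | ‖d s - d t₀‖ < δ/2} ∈ 𝓝[Icc (0:ℝ) 1] t₀ := by
    have h := Metric.tendsto_nhds.mp (hnc t₀ ht₀) (δ/2) (by positivity)
    filter_upwards [h] with s hs
    rw [dist_eq_norm] at hs
    exact hs
  obtain ⟨r, hr0, hrsub⟩ := Metric.mem_nhdsWithin_iff.mp hev
  set V : Set ℝ := Icc (0:ℝ) 1 ∩ ball t₀ r with hV
  have hVsub : V ⊆ Icc (0:ℝ) 1 := inter_subset_left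
  have hVnear : ∀ s ∈ V, ‖d s - d t₀‖ < δ/2 := by
    intro s hs
    exact hrsub ⟨hs.2, hs.1⟩
  -- gap for d s on V
  have hgap_s : ∀ s ∈ V, ∀ x ∈ spectrum ℝ (d s), x ∉ Ioo (μ - δ/2) (μ + δ/2) := by
    intro s hs x hx hxIoo
    have habs : |x - μ| ≤ δ/2 := by
      rw [abs_le]
      obtain ⟨hx1, hx2⟩ := hxIoo
      constructor <;> linarith
    exact gap_stable (hdsa t₀ ht₀) hδ0 hgap (hVnear s hs) habs hx
  -- the cut point
  set s4 : ℝ := Real.sqrt (1 - 4*μ) with hs4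
  have h4μ : 0 < 1 - 4*μ := by linarith
  have hs4sq : s4^2 = 1 - 4*μ := Real.sq_sqrt h4μ.le
  have hs4pos : 0 < s4 := Real.sqrt_pos.mpr h4μ
  have hs4lt1 : s4 < 1 := by
    nlinarith [hs4sq, hs4pos, hμpos]
  set c : ℝ := (1 - s4)/2 with hc
  have hc0 : 0 < c := by rw [hc]; linarith
  have hc12 : c < 1/2 := by rw [hc]; linarith
  have hψc : c - c*c = μ := by rw [hc]; nlinarith [hs4sq]
  set η : ℝ := min (δ/8) (c/2) with hη
  have hη0 : 0 < η := lt_min (by linarith) (by linarith)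
  have hηc : η ≤ c/2 := min_le_right _ _
  have hηδ : η ≤ δ/8 := min_le_left _ _
  have hcη0 : 0 < c - η := by linarith
  have hcηpos : 0 < c + η := by linarith
  -- spectrum of f s avoids (c - η, c + η)
  have hcase : ∀ s ∈ V, ∀ x ∈ spectrum ℝ (f s),
      x ∈ Icc (0:ℝ) 1 ∧ (x ≤ c - η ∨ c + η ≤ x) := by
    intro s hs x hx
    have hx01 : x ∈ Icc (0:ℝ) 1 := hspec s (hVsub hs) hx
    refine ⟨hx01, ?_⟩
    by_contra hcon
    push_neg at hcon
    obtain ⟨hxl, hxr⟩ := hcon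
    have hψx : x - x*x ∈ spectrum ℝ (d s) := by
      rw [← hdcfc s (hVsub hs), cfc_map_spectrum (fun x : ℝ => x - x*x) (f s) (hsa s (hVsub hs))]
      exact ⟨x, hx, rfl⟩
    apply hgap_s s hs _ hψx
    obtain ⟨hx0, hx1'⟩ := hx01
    constructor
    · rw [← hψc]
      nlinarith [hηδ, hη0, hδ0, hc0, hc12]
    · rw [← hψc]
      nlinarith [hηδ, hη0, hδ0, hc0, hc12]
  -- the step function
  set χ : ℝ → ℝ := fun x => max 0 (min 1 ((x - (c - η)) / (2*η))) with hχ
  have hχcont : Continuous χ := by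
    apply Continuous.max continuous_const
    apply Continuous.min continuous_const
    exact (continuous_id.sub continuous_const).div_const _
  have hχ0 : ∀ x, x ≤ c - η → χ x = 0 := by
    intro x hx
    rw [hχ]
    simp only
    rw [max_eq_left]
    exact le_trans (min_le_right _ _) (div_nonpos_of_nonpos_of_nonneg (by linarith) (by positivity))
  have hχ1 : ∀ x, c + η ≤ x → χ x = 1 := by
    intro x hx
    have ht : (1:ℝ) ≤ (x - (c - η)) / (2*η) := (one_le_div (by positivity)).mpr (by linarith)
    rw [hχ]
    simp only
    rw [min_eq_left ht, max_eq_right zero_le_one]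
  have hχ01 : ∀ x, 0 ≤ χ x ∧ χ x ≤ 1 := by
    intro x
    exact ⟨le_max_left _ _, max_le zero_le_one (min_le_left _ _)⟩
  -- the correction function
  have hden1 : ∀ x : ℝ, (1 - min x (1/2)) ≠ 0 := by
    intro x
    have := min_le_right x (1/2 : ℝ)
    intro h
    have : min x (1/2 : ℝ) = 1 := by linarith
    linarith [min_le_right x (1/2 : ℝ)]
  have hden2 : ∀ x : ℝ, max x (c + η) ≠ 0 := by
    intro x
    have := le_max_right x (c + η)
    intro h
    linarith [le_max_right x (c + η)]
  set u : ℝ → ℝ := fun x => (1 - χ x) * (1 - min x (1/2))⁻¹ - χ x * (max x (c + η))⁻¹ with hu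
  have hucont : Continuous u := by
    apply Continuous.sub
    · exact (continuous_const.sub hχcont).mul
        ((continuous_const.sub (continuous_id.min continuous_const)).inv₀ hden1)
    · exact hχcont.mul ((continuous_id.max continuous_const).inv₀ hden2)
  have hubound : ∀ x : ℝ, ‖u x‖ ≤ 2 + (c + η)⁻¹ := by
    intro x
    obtain ⟨hχl, hχr⟩ := hχ01 x
    have hm1 : min x (1/2 : ℝ) ≤ 1/2 := min_le_right _ _
    have hd1pos : (0:ℝ) < 1 - min x (1/2) := by linarith
    have hi1 : (1 - min x (1/2))⁻¹ ≤ 2 := by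
      rw [inv_le_comm₀ hd1pos (by norm_num)]
      norm_num
      linarith
    have hi1pos : (0:ℝ) < (1 - min x (1/2))⁻¹ := inv_pos.mpr hd1pos
    have hd2pos : (0:ℝ) < max x (c + η) := lt_of_lt_of_le hcηpos (le_max_right _ _)
    have hi2 : (max x (c + η))⁻¹ ≤ (c + η)⁻¹ := by
      apply inv_anti₀ hcηpos (le_max_right _ _)
    have hi2pos : (0:ℝ) < (max x (c + η))⁻¹ := inv_pos.mpr hd2pos
    rw [Real.norm_eq_abs, hu]
    simp only
    have hb1 : |(1 - χ x) * (1 - min x (1/2))⁻¹| ≤ 2 := by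
      rw [abs_mul, abs_of_nonneg (by linarith : (0:ℝ) ≤ 1 - χ x), abs_of_pos hi1pos]
      nlinarith
    have hb2 : |χ x * (max x (c + η))⁻¹| ≤ (c + η)⁻¹ := by
      rw [abs_mul, abs_of_nonneg hχl, abs_of_pos hi2pos]
      nlinarith [inv_pos.mpr hcηpos]
    calc |(1 - χ x) * (1 - min x (1/2))⁻¹ - χ x * (max x (c + η))⁻¹|
        ≤ |(1 - χ x) * (1 - min x (1/2))⁻¹| + |χ x * (max x (c + η))⁻¹| := abs_sub _ _
      _ ≤ 2 + (c + η)⁻¹ := add_le_add hb1 hb2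
  -- the key pointwise identity on the spectrum
  have hid : ∀ s ∈ V, ∀ x ∈ spectrum ℝ (f s), x - χ x = u x * (x - x*x) := by
    intro s hs x hx
    obtain ⟨⟨hx0, hx1⟩, hcases⟩ := hcase s hs x hx
    rcases hcases with hle | hge
    · have hχx : χ x = 0 := hχ0 x hle
      have hmin : min x (1/2 : ℝ) = x := min_eq_left (by linarith)
      have hne : (1:ℝ) - x ≠ 0 := by
        intro h
        have : x = 1 := by linarith
        rw [this] at hle
        linarith
      rw [hu]
      simp only
      rw [hχx, hmin]
      field_simp
      ring
    · have hχx : χ x = 1 := hχ1 x hge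
      have hmax : max x (c + η) = x := max_eq_left (by linarith)
      have hne : x ≠ 0 := by
        intro h
        rw [h] at hge
        linarith
      rw [hu]
      simp only
      rw [hχx, hmax]
      field_simp
      ring
  -- the projection-valued lift
  refine ⟨r, hr0, fun s => cfc χ (f s), ?_, ?_, ?_, ?_⟩
  · intro v
    exact strong_cfc f V (fun s hs => hsa s (hVsub hs)) (fun s hs => hnorm1 s (hVsub hs))
      (fun s hs => hspec s (hVsub hs)) (fun w => (hsc w).mono hVsub) χ hχcont v
  · intro s hs
    refine ⟨cfc_predicate χ (f s), ?_⟩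
    rw [← cfc_mul χ χ (f s) hχcont.continuousOn hχcont.continuousOn]
    apply cfc_congr
    intro x hx
    obtain ⟨_, hcases⟩ := hcase s hs x hx
    rcases hcases with hle | hge
    · have h := hχ0 x hle
      simp only [h]
      ring
    · have h := hχ1 x hge
      simp only [h]
      ring
  all_goals {
    have hkey : ∀ s ∈ V, f s - cfc χ (f s) = cfc u (f s) * d s := by
      intro s hs
      have hsaS := hsa s (hVsub hs)
      calc f s - cfc χ (f s) = cfc (fun x : ℝ => x) (f s) - cfc χ (f s) := by
            rw [cfc_id' ℝ (f s)]
        _ = cfc (fun x : ℝ => x - χ x) (f s) := by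
            rw [cfc_sub (fun x : ℝ => x) χ (f s) (by fun_prop) hχcont.continuousOn]
        _ = cfc (fun x : ℝ => u x * (x - x*x)) (f s) := cfc_congr (fun x hx => hid s hs x hx)
        _ = cfc u (f s) * cfc (fun x : ℝ => x - x*x) (f s) := by
            rw [cfc_mul u (fun x : ℝ => x - x*x) (f s) hucont.continuousOn (by fun_prop)]
        _ = cfc u (f s) * d s := by rw [hdcfc s (hVsub hs)]
    first
    | -- norm continuity
      (apply ContinuousOn.congr (f := fun s => cfc u (f s) * d s)
       · exact normcont_mul (fun s => cfc u (f s)) d V (2 + (c + η)⁻¹)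
           (by positivity)
           (fun s hs => norm_cfc_le (by positivity) (fun x _ => hubound x))
           (fun v => strong_cfc f V (fun s hs => hsa s (hVsub hs))
             (fun s hs => hnorm1 s (hVsub hs)) (fun s hs => hspec s (hVsub hs))
             (fun w => (hsc w).mono hVsub) u hucont v)
           (hnc.mono hVsub)
           (fun s hs => hK s (hVsub hs))
       · exact fun s hs => hkey s hs)
    | -- compactness
      (intro s hs
       rw [hkey s hs]
       exact (hK s (hVsub hs)).clm_comp (cfc u (f s)))
  }

end Helpers

/-- A projection on a Hilbert space: a self-adjoint idempotent bounded operator. -/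
def IsProjection {H : Type*} [NormedAddCommGroup H] [InnerProductSpace ℂ H]
    [CompleteSpace H] (p : H →L[ℂ] H) : Prop :=
  IsSelfAdjoint p ∧ p * p = p

/-- Every projection in the corona algebra of `C([0,1]) ⊗ K` admits a projection-valued
local lifting: if `f : [0,1] → B(H)` is strongly continuous, self-adjoint valued with
`0 ≤ f t ≤ 1`, and `t ↦ f t - f t ^ 2` is norm continuous and compact valued, then there
is a partition `0 = x₀ < x₁ < ⋯ < x_{n+1} = 1` and strongly continuous projection-valued
maps `fᵢ` on `[xᵢ, xᵢ₊₁]` with `f - fᵢ` norm continuous and compact valued on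
`[xᵢ, xᵢ₊₁]`, and `fᵢ(xᵢ) - fᵢ₋₁(xᵢ)` compact for `i = 1, …, n`. -/
theorem projection_local_lifting {H : Type*} [NormedAddCommGroup H]
    [InnerProductSpace ℂ H] [CompleteSpace H]
    (f : ℝ → H →L[ℂ] H)
    (hsc : ∀ v : H, ContinuousOn (fun t => f t v) (Icc (0:ℝ) 1))
    (hsa : ∀ t ∈ Icc (0:ℝ) 1, IsSelfAdjoint (f t))
    (hpos : ∀ t ∈ Icc (0:ℝ) 1, (f t).IsPositive ∧ (1 - f t).IsPositive)
    (hnc : ContinuousOn (fun t => f t - f t * f t) (Icc (0:ℝ) 1))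
    (hK : ∀ t ∈ Icc (0:ℝ) 1, IsCompactOperator (⇑(f t - f t * f t))) :
    ∃ (n : ℕ) (x : ℕ → ℝ) (g : ℕ → ℝ → H →L[ℂ] H),
      x 0 = 0 ∧ x (n + 1) = 1 ∧ (∀ i ≤ n, x i < x (i + 1)) ∧
      (∀ i ≤ n, ∀ v : H, ContinuousOn (fun t => g i t v) (Icc (x i) (x (i + 1)))) ∧
      (∀ i ≤ n, ∀ t ∈ Icc (x i) (x (i + 1)), IsProjection (g i t)) ∧
      (∀ i ≤ n, ContinuousOn (fun t => f t - g i t) (Icc (x i) (x (i + 1)))) ∧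
      (∀ i ≤ n, ∀ t ∈ Icc (x i) (x (i + 1)), IsCompactOperator (⇑(f t - g i t))) ∧
      (∀ i, 1 ≤ i → i ≤ n → IsCompactOperator (⇑(g i (x i) - g (i - 1) (x i)))) := by
  have hloc := local_lift f hsc hsa hpos hnc hK
  choose! r hr0 G hG1 hG2 hG3 hG4 using hloc
  have hcover : Icc (0:ℝ) 1 ⊆ ⋃ i : ↥(Icc (0:ℝ) 1), ball (i:ℝ) (r i) := by
    intro t ht
    exact mem_iUnion.mpr ⟨⟨t, ht⟩, mem_ball_self (hr0 t ht)⟩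
  obtain ⟨δL, hδL, hLeb⟩ := lebesgue_number_lemma_of_metric isCompact_Icc
    (fun i => isOpen_ball) hcover
  obtain ⟨n, hn⟩ := exists_nat_one_div_lt hδL
  set x : ℕ → ℝ := fun i => (i:ℝ)/((n:ℝ)+1) with hx
  have hnpos : (0:ℝ) < (n:ℝ)+1 := by positivity
  have hximem : ∀ i : ℕ, i ≤ n + 1 → x i ∈ Icc (0:ℝ) 1 := by
    intro i hi
    constructor
    · positivity
    · rw [hx]
      simp only
      rw [div_le_one hnpos]
      have : (i:ℝ) ≤ (n:ℝ)+1 := by exact_mod_cast Nat.cast_le.mpr hi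
      linarith [this]
  have hJsub : ∀ i : ℕ, i ≤ n → ∀ s ∈ Icc (x i) (x (i+1)), s ∈ Icc (0:ℝ) 1 := by
    intro i hi s hs
    obtain ⟨hs1, hs2⟩ := hs
    constructor
    · exact le_trans (hximem i (by omega)).1 hs1
    · exact le_trans hs2 (hximem (i+1) (by omega)).2
  have hgood : ∀ i : ℕ, i ≤ n → ∃ gi : ℝ → H →L[ℂ] H,
      (∀ v : H, ContinuousOn (fun s => gi s v) (Icc (x i) (x (i+1)))) ∧
      (∀ s ∈ Icc (x i) (x (i+1)), IsSelfAdjoint (gi s) ∧ gi s * gi s = gi s) ∧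
      ContinuousOn (fun s => f s - gi s) (Icc (x i) (x (i+1))) ∧
      (∀ s ∈ Icc (x i) (x (i+1)), IsCompactOperator ⇑(f s - gi s)) := by
    intro i hi
    obtain ⟨p, hp⟩ := hLeb (x i) (hximem i (by omega))
    have hsub : Icc (x i) (x (i+1)) ⊆ Icc (0:ℝ) 1 ∩ ball (p:ℝ) (r p) := by
      intro s hs
      refine ⟨hJsub i hi s hs, hp ?_⟩
      rw [mem_ball, Real.dist_eq]
      obtain ⟨hs1, hs2⟩ := hs
      have hgapw : x (i+1) - x i = 1/((n:ℝ)+1) := by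
        rw [hx]
        push_cast
        field_simp
        ring
      rw [abs_lt]
      constructor
      · linarith
      · linarith
    refine ⟨G p, ?_, ?_, ?_, ?_⟩
    · exact fun v => (hG1 p p.2 v).mono hsub
    · exact fun s hs => hG2 p p.2 s (hsub hs)
    · exact (hG3 p p.2).mono hsub
    · exact fun s hs => hG4 p p.2 s (hsub hs)
  choose! g hg1 hg2 hg3 hg4 using hgood
  have hxmono : ∀ {a b : ℕ}, a ≤ b → x a ≤ x b := by
    intro a b hab
    show (a:ℝ)/((n:ℝ)+1) ≤ (b:ℝ)/((n:ℝ)+1)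
    have hab' : (a:ℝ) ≤ (b:ℝ) := by exact_mod_cast hab
    gcongr
  have hxstrict : ∀ i : ℕ, x i < x (i+1) := by
    intro i
    show (i:ℝ)/((n:ℝ)+1) < ((i+1:ℕ):ℝ)/((n:ℝ)+1)
    have hcast : ((i+1:ℕ):ℝ) = (i:ℝ)+1 := by push_cast; ring
    rw [hcast]
    gcongr
    linarith
  refine ⟨n, x, g, ?_, ?_, ?_, ?_, ?_, ?_, ?_, ?_⟩
  · rw [hx]; simp
  · rw [hx]; push_cast; field_simp
  · exact fun i _ => hxstrict i
  · exact fun i hi v => hg1 i hi v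
  · exact fun i hi t ht => hg2 i hi t ht
  · exact fun i hi => hg3 i hi
  · exact fun i hi t ht => hg4 i hi t ht
  · intro i h1i hin
    have hi1n : i - 1 ≤ n := by omega
    have hie : (i-1) + 1 = i := by omega
    have hmono : x (i-1) ≤ x i := hxmono (by omega)
    have hmemA : x i ∈ Icc (x (i-1)) (x ((i-1)+1)) := by
      rw [hie]
      exact ⟨hmono, le_refl _⟩
    have hmemB : x i ∈ Icc (x i) (x (i+1)) := ⟨le_refl _, (hxstrict i).le⟩
    have hA := hg4 (i-1) hi1n (x i) hmemA
    have hB := hg4 i hin (x i) hmemB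
    have e : g i (x i) - g (i-1) (x i)
        = (f (x i) - g (i-1) (x i)) - (f (x i) - g i (x i)) := by abel
    rw [e, ContinuousLinearMap.coe_sub']
    exact hA.sub hB
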